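/- Let X be a normal topological space and φ : X → Set ℝ a lower semicontinuous set-valued map such that each φ(x) is either a nonempty compact convex subset of ℝ or all of ℝ. Then φ admits a continuous single-valued selection. -/

import Mathlib

open Set Filter Topology

namespace MichaelSel

variable {X : Type*} [TopologicalSpace X] [NormalSpace X]

/-- One-step approximate insertion. -/
lemma step (g h : X → ℝ) (hg : ∀ t : ℝ, IsOpen {x | g x < t})
    (hh : ∀ t : ℝ, IsOpen {x | t < h x})
    (hgh : ∀ x, g x ≤ h x) (hg0 : ∀ x, 0 ≤ g x) (hh1 : ∀ x, h x ≤ 1)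
    {ε : ℝ} (hε : 0 < ε) :
    ∃ f : X → ℝ, Continuous f ∧
      ∀ x, g x - ε ≤ f x ∧ f x ≤ h x + ε ∧ 0 ≤ f x ∧ f x ≤ 1 := by
  obtain ⟨n, hn⟩ := exists_nat_one_div_lt hε
  set N : ℕ := n + 1 with hN
  have hNpos : (0:ℝ) < N := by positivity
  -- closed sets
  have hA : ∀ k : ℕ, IsClosed {x | ((k:ℝ)+1)/N ≤ g x} := by
    intro k
    have : {x | ((k:ℝ)+1)/N ≤ g x} = {x | g x < ((k:ℝ)+1)/N}ᶜ := by
      ext x; simp [not_lt]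
    rw [this]; exact (hg _).isClosed_compl
  have hB : ∀ k : ℕ, IsClosed {x | h x ≤ (k:ℝ)/N} := by
    intro k
    have : {x | h x ≤ (k:ℝ)/N} = {x | (k:ℝ)/N < h x}ᶜ := by
      ext x; simp [not_lt]
    rw [this]; exact (hh _).isClosed_compl
  have hdisj : ∀ k : ℕ, Disjoint {x | h x ≤ (k:ℝ)/N} {x | ((k:ℝ)+1)/N ≤ g x} := by
    intro k
    rw [Set.disjoint_left]
    intro x hx1 hx2
    simp only [mem_setOf_eq] at hx1 hx2
    have := hgh x
    have h1 : ((k:ℝ)+1)/N ≤ (k:ℝ)/N := le_trans hx2 (le_trans this hx1)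
    rw [div_le_div_iff_of_pos_right hNpos] at h1
    linarith
  choose u hu0 hu1 hu01 using fun k : ℕ =>
    exists_continuous_zero_one_of_isClosed (hB k) (hA k) (hdisj k)
  refine ⟨fun x => (∑ k ∈ Finset.range N, u k x) / N, ?_, ?_⟩
  · exact (continuous_finset_sum _ fun k _ => (u k).continuous).div_const _
  intro x
  have husum0 : ∀ k, 0 ≤ u k x := fun k => (hu01 k x).1
  have husum1 : ∀ k, u k x ≤ 1 := fun k => (hu01 k x).2
  have hsum_nonneg : 0 ≤ ∑ k ∈ Finset.range N, u k x :=
    Finset.sum_nonneg fun k _ => husum0 k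
  have hsum_le : (∑ k ∈ Finset.range N, u k x) ≤ N := by
    calc (∑ k ∈ Finset.range N, u k x) ≤ ∑ k ∈ Finset.range N, 1 :=
          Finset.sum_le_sum fun k _ => husum1 k
      _ = N := by simp
  have h4 : (1:ℝ) < ε * N := by
    have h3 : (1:ℝ)/N < ε := by
      have : (1:ℝ)/N = 1/(n+1) := by rw [hN]; push_cast; norm_num
      rw [this]; exact hn
    exact (div_lt_iff₀ hNpos).1 h3
  constructor
  · -- lower bound
    set m : ℕ := ⌊(N:ℝ) * g x⌋₊ with hm
    have hmN : m ≤ N := by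
      have : (N:ℝ) * g x ≤ (N:ℝ) * 1 := by
        have := (hgh x).trans (hh1 x); nlinarith
      calc m ≤ ⌊(N:ℝ)⌋₊ := Nat.floor_mono (by linarith)
        _ = N := Nat.floor_natCast N
    have hkey : (m:ℝ) ≤ ∑ k ∈ Finset.range N, u k x := by
      have hsub : Finset.range m ⊆ Finset.range N := Finset.range_subset_range.2 hmN
      have h1 : ∀ k ∈ Finset.range m, u k x = 1 := by
        intro k hk
        apply hu1 k
        simp only [mem_setOf_eq]
        rw [div_le_iff₀ hNpos]
        have hk' : (k:ℝ) + 1 ≤ m := by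
          have := Finset.mem_range.1 hk
          exact_mod_cast Nat.succ_le_of_lt this
        calc (k:ℝ) + 1 ≤ m := hk'
          _ ≤ (N:ℝ) * g x := by rw [hm]; exact Nat.floor_le (mul_nonneg hNpos.le (hg0 x))
          _ = g x * N := by ring
      calc (m:ℝ) = ∑ k ∈ Finset.range m, u k x := by
            rw [Finset.sum_congr rfl h1]; simp
        _ ≤ ∑ k ∈ Finset.range N, u k x :=
            Finset.sum_le_sum_of_subset_of_nonneg hsub fun k _ _ => husum0 k
    have hfloor : (N:ℝ) * g x - 1 < m := by
      rw [hm]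
      have := Nat.lt_floor_add_one ((N:ℝ) * g x)
      linarith
    show g x - ε ≤ (∑ k ∈ Finset.range N, u k x) / N
    rw [le_div_iff₀ hNpos]
    nlinarith [hkey, hfloor, h4]
  refine ⟨?_, by positivity, ?_⟩
  · -- upper bound
    set m : ℕ := ⌊(N:ℝ) * h x⌋₊ + 1 with hm
    have hkey : (∑ k ∈ Finset.range N, u k x) ≤ m := by
      have hle : ∀ k ∈ Finset.range N, u k x ≤ if k < m then 1 else 0 := by
        intro k _
        by_cases hk : k < m
        · simp [hk, husum1 k]
        · simp only [hk, if_false]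
          have hk' : (N:ℝ) * h x < k := by
            push_neg at hk
            have h5 : ((⌊(N:ℝ) * h x⌋₊ : ℝ) + 1) ≤ k := by
              rw [hm] at hk; exact_mod_cast hk
            have h2 := Nat.lt_floor_add_one ((N:ℝ) * h x)
            linarith
          have : u k x = 0 := by
            apply hu0 k
            simp only [mem_setOf_eq]
            rw [le_div_iff₀ hNpos]
            nlinarith [hk']
          simp [this]
      calc (∑ k ∈ Finset.range N, u k x)
          ≤ ∑ k ∈ Finset.range N, (if k < m then (1:ℝ) else 0) :=
            Finset.sum_le_sum hle
        _ = ∑ k ∈ (Finset.range N).filter (fun k => k < m), (1:ℝ) :=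
            (Finset.sum_filter _ _).symm
        _ ≤ ∑ k ∈ Finset.range m, (1:ℝ) := by
            apply Finset.sum_le_sum_of_subset_of_nonneg
            · intro k hk
              simp only [Finset.mem_filter, Finset.mem_range] at hk ⊢
              exact hk.2
            · intros; norm_num
        _ = m := by simp
    have hfloorle : ((m:ℝ) - 1) ≤ (N:ℝ) * h x := by
      have h0 : 0 ≤ (N:ℝ) * h x := mul_nonneg hNpos.le ((hg0 x).trans (hgh x))
      have := Nat.floor_le h0
      rw [hm, Nat.cast_add, Nat.cast_one]
      linarith
    rw [div_le_iff₀ hNpos]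
    nlinarith [hkey, hfloorle, h4]
  · rw [div_le_one hNpos]; exact hsum_le

/-- Katětov–Tong insertion theorem (bounded version). -/
lemma insertion (g h : X → ℝ) (hg : ∀ t : ℝ, IsOpen {x | g x < t})
    (hh : ∀ t : ℝ, IsOpen {x | t < h x})
    (hgh : ∀ x, g x ≤ h x) (hg0 : ∀ x, 0 ≤ g x) (hh1 : ∀ x, h x ≤ 1) :
    ∃ f : X → ℝ, Continuous f ∧ ∀ x, g x ≤ f x ∧ f x ≤ h x := by
  classical
  set Q : ℕ → (X → ℝ) → Prop := fun n f => Continuous f ∧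
    ∀ x, g x - (1/2)^n ≤ f x ∧ f x ≤ h x + (1/2)^n ∧ 0 ≤ f x ∧ f x ≤ 1 with hQ
  have hstep : ∀ n : ℕ, ∀ fq : {f : X → ℝ // Q n f},
      ∃ f' : {f : X → ℝ // Q (n+1) f}, ∀ x, |f'.1 x - fq.1 x| ≤ 2 * (1/2)^n := by
    rintro n ⟨f, hfc, hf⟩
    set ε : ℝ := (1/2)^n with hε
    have hεpos : 0 < ε := by positivity
    set g' : X → ℝ := fun x => max (g x) (f x - ε) with hg'
    set h' : X → ℝ := fun x => min (h x) (f x + ε) with hh'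
    have hg'o : ∀ t : ℝ, IsOpen {x | g' x < t} := by
      intro t
      have : {x | g' x < t} = {x | g x < t} ∩ {x | f x - ε < t} := by
        ext x; simp [hg', max_lt_iff]
      rw [this]
      exact (hg t).inter (isOpen_lt (hfc.sub continuous_const) continuous_const)
    have hh'o : ∀ t : ℝ, IsOpen {x | t < h' x} := by
      intro t
      have : {x | t < h' x} = {x | t < h x} ∩ {x | t < f x + ε} := by
        ext x; simp [hh', lt_min_iff]
      rw [this]
      exact (hh t).inter (isOpen_lt continuous_const (hfc.add continuous_const))
    have hg'h' : ∀ x, g' x ≤ h' x := by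
      intro x
      obtain ⟨h1, h2, _, _⟩ := hf x
      simp only [hg', hh', max_le_iff, le_min_iff]
      exact ⟨⟨hgh x, by linarith⟩, ⟨by linarith, by linarith⟩⟩
    have hg'0 : ∀ x, 0 ≤ g' x := fun x => le_trans (hg0 x) (le_max_left _ _)
    have hh'1 : ∀ x, h' x ≤ 1 := fun x => le_trans (min_le_left _ _) (hh1 x)
    obtain ⟨f', hf'c, hf'⟩ := step g' h' hg'o hh'o hg'h' hg'0 hh'1
      (ε := (1/2)^(n+1)) (by positivity)
    refine ⟨⟨f', hf'c, ?_⟩, ?_⟩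
    · intro x
      obtain ⟨ha, hb, hc, hd⟩ := hf' x
      refine ⟨?_, ?_, hc, hd⟩
      · have := le_max_left (g x) (f x - ε)
        simp only [hg'] at ha
        linarith [le_max_left (g x) (f x - ε)]
      · have := min_le_left (h x) (f x + ε)
        simp only [hh'] at hb
        linarith [min_le_left (h x) (f x + ε)]
    · intro x
      obtain ⟨ha, hb, _, _⟩ := hf' x
      simp only [hg'] at ha
      simp only [hh'] at hb
      have h1 : f x - ε - (1/2)^(n+1) ≤ f' x := by
        linarith [le_max_right (g x) (f x - ε)]
      have h2 : f' x ≤ f x + ε + (1/2)^(n+1) := by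
        linarith [min_le_right (h x) (f x + ε)]
      have hhalf : ((1:ℝ)/2)^(n+1) ≤ (1/2)^n := by
        apply pow_le_pow_of_le_one <;> norm_num
      rw [abs_le]
      constructor <;> linarith
  -- initial function
  obtain ⟨f0, hf0c, hf0⟩ := step g h hg hh hgh hg0 hh1 (ε := (1:ℝ)) one_pos
  have hQ0 : Q 0 f0 := by
    refine ⟨hf0c, fun x => ?_⟩
    obtain ⟨ha, hb, hc, hd⟩ := hf0 x
    simp only [pow_zero]
    exact ⟨ha, hb, hc, hd⟩
  choose nxt hnxt using hstep
  let F : ∀ n : ℕ, {f : X → ℝ // Q n f} := fun n => Nat.rec ⟨f0, hQ0⟩ nxt n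
  have hFsucc : ∀ n, F (n+1) = nxt n (F n) := fun n => rfl
  have hFd : ∀ n x, dist ((F n).1 x) ((F (n+1)).1 x) ≤ 2 * (1/2)^n := by
    intro n x
    rw [Real.dist_eq, abs_sub_comm, hFsucc n]
    exact hnxt n (F n) x
  have hcauchy : ∀ x : X, ∃ L : ℝ, Tendsto (fun n => (F n).1 x) atTop (𝓝 L) := by
    intro x
    have : CauchySeq (fun n => (F n).1 x) :=
      cauchySeq_of_le_geometric (1/2) 2 (by norm_num) (fun n => hFd n x)
    exact cauchySeq_tendsto_of_complete this
  choose f hf using hcauchy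
  have hdistf : ∀ n x, dist ((F n).1 x) (f x) ≤ 2 * (1/2)^n / (1 - 1/2) :=
    fun n x => dist_le_of_le_geometric_of_tendsto (1/2) 2 (by norm_num)
      (fun k => hFd k x) (hf x) n
  have hunif : TendstoUniformly (fun n x => (F n).1 x) f atTop := by
    rw [Metric.tendstoUniformly_iff]
    intro ε hε
    have : Tendsto (fun n : ℕ => 2 * (1/2:ℝ)^n / (1 - 1/2)) atTop (𝓝 0) := by
      have h2 := tendsto_pow_atTop_nhds_zero_of_lt_one
        (by norm_num : (0:ℝ) ≤ 1/2) (by norm_num : (1/2:ℝ) < 1)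
      have := (h2.const_mul (2:ℝ)).div_const (1 - 1/2)
      simpa using this
    filter_upwards [this.eventually (gt_mem_nhds hε)] with n hn x
    rw [dist_comm]
    exact lt_of_le_of_lt (hdistf n x) hn
  have hfc : Continuous f :=
    hunif.continuous (Filter.Eventually.frequently (Filter.Eventually.of_forall fun n => (F n).2.1))
  refine ⟨f, hfc, fun x => ⟨?_, ?_⟩⟩
  · have hle : ∀ n, g x - (1/2)^n ≤ (F n).1 x := fun n => ((F n).2.2 x).1
    have hlim : Tendsto (fun n : ℕ => g x - (1/2:ℝ)^n) atTop (𝓝 (g x)) := by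
      have h2 := tendsto_pow_atTop_nhds_zero_of_lt_one
        (by norm_num : (0:ℝ) ≤ 1/2) (by norm_num : (1/2:ℝ) < 1)
      simpa using (tendsto_const_nhds (x := g x)).sub h2
    exact le_of_tendsto_of_tendsto' hlim (hf x) hle
  · have hle : ∀ n, (F n).1 x ≤ h x + (1/2)^n := fun n => ((F n).2.2 x).2.1
    have hlim : Tendsto (fun n : ℕ => h x + (1/2:ℝ)^n) atTop (𝓝 (h x)) := by
      have h2 := tendsto_pow_atTop_nhds_zero_of_lt_one
        (by norm_num : (0:ℝ) ≤ 1/2) (by norm_num : (1/2:ℝ) < 1)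
      simpa using (tendsto_const_nhds (x := h x)).add h2
    exact le_of_tendsto_of_tendsto' (hf x) hlim hle

noncomputable def rr (t : ℝ) : ℝ := t / (1 + |t|)

lemma rr_cont : Continuous rr := by
  apply continuous_id.div (by continuity)
  intro t
  have := abs_nonneg t
  positivity

lemma rr_abs_lt (t : ℝ) : |rr t| < 1 := by
  have h1 : (0:ℝ) < 1 + |t| := by positivity
  rw [rr, abs_div, abs_of_pos h1, div_lt_one h1]
  linarith [abs_nonneg t]

lemma rr_mono : StrictMono rr := by
  intro a b hab
  have ha : (0:ℝ) < 1 + |a| := by positivity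
  have hb : (0:ℝ) < 1 + |b| := by positivity
  rw [rr, rr, div_lt_div_iff₀ ha hb]
  rcases abs_cases a with ⟨ha1, _⟩ | ⟨ha1, _⟩ <;>
    rcases abs_cases b with ⟨hb1, _⟩ | ⟨hb1, _⟩ <;> nlinarith

lemma rr_inv {s : ℝ} (hs : |s| < 1) : rr (s / (1 - |s|)) = s := by
  have h1 : (0:ℝ) < 1 - |s| := by linarith
  have h2 : |s / (1 - |s|)| = |s| / (1 - |s|) := by
    rw [abs_div, abs_of_pos h1]
  rw [rr, h2]
  have h3 : 1 + |s| / (1 - |s|) = 1 / (1 - |s|) := by field_simp; ring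
  rw [h3]
  field_simp

lemma exists_rr_lt {t : ℝ} (ht : -1 < t) : ∃ y : ℝ, rr y < t := by
  set c : ℝ := (min t 1 - 1) / 2 with hc
  have h1 : -1 < c := by
    have : -1 < min t 1 := lt_min ht (by norm_num)
    rw [hc]; linarith
  have h2 : c ≤ 0 := by
    have : min t 1 ≤ 1 := min_le_right _ _
    rw [hc]; linarith
  have habs : |c| < 1 := abs_lt.2 ⟨h1, by linarith⟩
  refine ⟨c / (1 - |c|), ?_⟩
  rw [rr_inv habs]
  rcases le_or_gt t 1 with h | h
  · rw [hc, min_eq_left h]; linarith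
  · linarith

lemma exists_rr_gt {t : ℝ} (ht : t < 1) : ∃ y : ℝ, t < rr y := by
  set c : ℝ := (max t (-1) + 1) / 2 with hc
  have h1 : c < 1 := by
    have : max t (-1) < 1 := max_lt ht (by norm_num)
    rw [hc]; linarith
  have h2 : 0 ≤ c := by
    have : -1 ≤ max t (-1) := le_max_right _ _
    rw [hc]; linarith
  have habs : |c| < 1 := abs_lt.2 ⟨by linarith, h1⟩
  refine ⟨c / (1 - |c|), ?_⟩
  rw [rr_inv habs]
  rcases le_or_gt (-1) t with h | h
  · rw [hc, max_eq_left h]; linarith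
  · have : max t (-1) = -1 := max_eq_right h.le
    rw [hc, this]; linarith

end MichaelSel

open Set MichaelSel in
/-- Michael: an LSC map from a normal space into ℝ whose values are nonempty
compact convex sets or all of ℝ admits a continuous selection. -/
theorem selection_of_normal
    {X : Type*} [TopologicalSpace X] [NormalSpace X]
    (φ : X → Set ℝ)
    (hlsc : ∀ U : Set ℝ, IsOpen U → IsOpen {x | (φ x ∩ U).Nonempty})
    (hval : ∀ x, ((φ x).Nonempty ∧ IsCompact (φ x) ∧ Convex ℝ (φ x)) ∨ φ x = Set.univ) :
    ∃ f : X → ℝ, Continuous f ∧ ∀ x, f x ∈ φ x := by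
  classical
  set G : X → ℝ := fun x => if φ x = univ then -1 else rr (sInf (φ x)) with hGdef
  set H : X → ℝ := fun x => if φ x = univ then 1 else rr (sSup (φ x)) with hHdef
  -- basic facts in the compact case
  have hcomp : ∀ x, φ x ≠ univ →
      (φ x).Nonempty ∧ IsCompact (φ x) ∧ Convex ℝ (φ x) := by
    intro x hx
    rcases hval x with h | h
    · exact h
    · exact absurd h hx
  have hGeq : ∀ x, φ x ≠ univ → G x = rr (sInf (φ x)) := by
    intro x hx; simp only [hGdef, if_neg hx]
  have hHeq : ∀ x, φ x ≠ univ → H x = rr (sSup (φ x)) := by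
    intro x hx; simp only [hHdef, if_neg hx]
  -- G is usc
  have hGusc : ∀ t : ℝ, IsOpen {x | G x < t} := by
    intro t
    have heq : {x | G x < t} = {x | (φ x ∩ {y | rr y < t}).Nonempty} := by
      ext x
      simp only [mem_setOf_eq]
      by_cases hx : φ x = univ
      · simp only [hGdef, if_pos hx, hx, univ_inter]
        constructor
        · intro ht
          obtain ⟨y, hy⟩ := exists_rr_lt ht
          exact ⟨y, hy⟩
        · rintro ⟨y, hy⟩
          exact lt_of_le_of_lt (neg_le_of_abs_le (rr_abs_lt y).le) hy
      · obtain ⟨hne, hcpt, _⟩ := hcomp x hx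
        rw [hGeq x hx]
        constructor
        · intro ht
          exact ⟨sInf (φ x), hcpt.sInf_mem hne, ht⟩
        · rintro ⟨y, hy1, hy2⟩
          have h1 : sInf (φ x) ≤ y := csInf_le hcpt.bddBelow hy1
          exact lt_of_le_of_lt (rr_mono.monotone h1) hy2
    rw [heq]
    exact hlsc _ (isOpen_lt rr_cont continuous_const)
  -- H is lsc
  have hHlsc : ∀ t : ℝ, IsOpen {x | t < H x} := by
    intro t
    have heq : {x | t < H x} = {x | (φ x ∩ {y | t < rr y}).Nonempty} := by
      ext x
      simp only [mem_setOf_eq]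
      by_cases hx : φ x = univ
      · simp only [hHdef, if_pos hx, hx, univ_inter]
        constructor
        · intro ht
          obtain ⟨y, hy⟩ := exists_rr_gt ht
          exact ⟨y, hy⟩
        · rintro ⟨y, hy⟩
          exact lt_of_lt_of_le hy (le_of_abs_le (rr_abs_lt y).le)
      · obtain ⟨hne, hcpt, _⟩ := hcomp x hx
        rw [hHeq x hx]
        constructor
        · intro ht
          exact ⟨sSup (φ x), hcpt.sSup_mem hne, ht⟩
        · rintro ⟨y, hy1, hy2⟩
          have h1 : y ≤ sSup (φ x) := le_csSup hcpt.bddAbove hy1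
          exact lt_of_lt_of_le hy2 (rr_mono.monotone h1)
    rw [heq]
    exact hlsc _ (isOpen_lt continuous_const rr_cont)
  -- bounds and order
  have hGbd : ∀ x, -1 ≤ G x ∧ G x ≤ 1 := by
    intro x
    by_cases hx : φ x = univ
    · simp [hGdef, if_pos hx]
    · rw [hGeq x hx]
      have := rr_abs_lt (sInf (φ x))
      rw [abs_lt] at this
      exact ⟨this.1.le, this.2.le⟩
  have hHbd : ∀ x, -1 ≤ H x ∧ H x ≤ 1 := by
    intro x
    by_cases hx : φ x = univ
    · simp [hHdef, if_pos hx]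
    · rw [hHeq x hx]
      have := rr_abs_lt (sSup (φ x))
      rw [abs_lt] at this
      exact ⟨this.1.le, this.2.le⟩
  have hGH : ∀ x, G x ≤ H x := by
    intro x
    by_cases hx : φ x = univ
    · simp [hGdef, hHdef, if_pos hx]
    · obtain ⟨hne, hcpt, _⟩ := hcomp x hx
      rw [hGeq x hx, hHeq x hx]
      exact rr_mono.monotone (csInf_le_csSup hne hcpt.bddBelow hcpt.bddAbove)
  -- apply insertion to the rescaled functions
  obtain ⟨F2, hF2c, hF2⟩ := insertion (fun x => (G x + 1)/2) (fun x => (H x + 1)/2)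
    (by
      intro t
      have : {x | (G x + 1)/2 < t} = {x | G x < 2*t - 1} := by
        ext x; simp only [mem_setOf_eq]; constructor <;> intro <;> linarith
      rw [this]; exact hGusc _)
    (by
      intro t
      have : {x | t < (H x + 1)/2} = {x | 2*t - 1 < H x} := by
        ext x; simp only [mem_setOf_eq]; constructor <;> intro <;> linarith
      rw [this]; exact hHlsc _)
    (fun x => by have := hGH x; linarith)
    (fun x => by have := (hGbd x).1; linarith)
    (fun x => by have := (hHbd x).2; linarith)
  set F1 : X → ℝ := fun x => 2 * F2 x - 1 with hF1def
  have hF1c : Continuous F1 := by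
    apply Continuous.sub (by fun_prop) continuous_const
  have hGF1 : ∀ x, G x ≤ F1 x := by
    intro x; have := (hF2 x).1; simp only [hF1def]; linarith
  have hF1H : ∀ x, F1 x ≤ H x := by
    intro x; have := (hF2 x).2; simp only [hF1def]; linarith
  have hF1bd : ∀ x, -1 ≤ F1 x ∧ F1 x ≤ 1 := by
    intro x
    constructor
    · linarith [(hGbd x).1, hGF1 x]
    · linarith [(hHbd x).2, hF1H x]
  -- the bad set and the Urysohn patch
  set P : Set X := {x | F1 x = -1 ∨ F1 x = 1} with hPdef
  have hPclosed : IsClosed P := by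
    have : P = F1 ⁻¹' {-1} ∪ F1 ⁻¹' {1} := by
      ext x; simp [hPdef]
    rw [this]
    exact (isClosed_singleton.preimage hF1c).union (isClosed_singleton.preimage hF1c)
  set O : Set X := {x | G x < -(1/2)} ∩ {x | (1/2 : ℝ) < H x} with hOdef
  have hOopen : IsOpen O := (hGusc _).inter (hHlsc _)
  have hPuniv : ∀ x ∈ P, φ x = univ := by
    intro x hx
    by_contra hxu
    obtain ⟨hne, hcpt, _⟩ := hcomp x hxu
    rcases hx with h | h
    · have h1 : G x ≤ -1 := h ▸ hGF1 x
      rw [hGeq x hxu] at h1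
      have := rr_abs_lt (sInf (φ x))
      rw [abs_lt] at this
      linarith [this.1]
    · have h1 : (1:ℝ) ≤ H x := h ▸ hF1H x
      rw [hHeq x hxu] at h1
      have := rr_abs_lt (sSup (φ x))
      rw [abs_lt] at this
      linarith [this.2]
  have hPO : P ⊆ O := by
    intro x hx
    have hu := hPuniv x hx
    constructor
    · show G x < -(1/2)
      simp only [hGdef, if_pos hu]; norm_num
    · show (1/2 : ℝ) < H x
      simp only [hHdef, if_pos hu]; norm_num
  obtain ⟨lam, hlam0, hlam1, hlam01⟩ :=
    exists_continuous_zero_one_of_isClosed (isClosed_compl_iff.2 hOopen) hPclosed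
      ((disjoint_compl_left (a := O)).mono_right hPO)
  set F : X → ℝ := fun x => (1 - lam x) * F1 x with hFdef
  have hFc : Continuous F := (continuous_const.sub lam.continuous).mul hF1c
  have hGF : ∀ x, G x ≤ F x := by
    intro x
    by_cases hx : x ∈ O
    · have hG : G x < -(1/2) := hx.1
      have hl := hlam01 x
      rcases le_or_gt 0 (F1 x) with h | h
      · have : 0 ≤ F x := mul_nonneg (by linarith [hl.2]) h
        linarith
      · have : F1 x ≤ F x := by
          simp only [hFdef]
          nlinarith [mul_nonneg hl.1 (by linarith : (0:ℝ) ≤ -F1 x)]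
        linarith [hGF1 x]
    · have : lam x = 0 := hlam0 hx
      simp only [hFdef, this]
      simpa using hGF1 x
  have hFH : ∀ x, F x ≤ H x := by
    intro x
    by_cases hx : x ∈ O
    · have hH : (1/2 : ℝ) < H x := hx.2
      have hl := hlam01 x
      rcases le_or_gt (F1 x) 0 with h | h
      · have : F x ≤ 0 := mul_nonpos_of_nonneg_of_nonpos (by linarith [hl.2]) h
        linarith
      · have : F x ≤ F1 x := by
          simp only [hFdef]
          nlinarith [mul_nonneg hl.1 h.le]
        linarith [hF1H x]
    · have : lam x = 0 := hlam0 hx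
      simp only [hFdef, this]
      simpa using hF1H x
  have hFabs : ∀ x, |F x| < 1 := by
    intro x
    by_cases hx : x ∈ P
    · have : lam x = 1 := hlam1 hx
      simp [hFdef, this]
    · have hne : F1 x ≠ -1 ∧ F1 x ≠ 1 := by
        constructor <;> intro h <;> exact hx (by simp [hPdef, h])
      have habs1 : |F1 x| < 1 := by
        rcases hF1bd x with ⟨h1, h2⟩
        rw [abs_lt]
        exact ⟨lt_of_le_of_ne h1 (Ne.symm hne.1), lt_of_le_of_ne h2 hne.2⟩
      have hl := hlam01 x
      calc |F x| = |1 - lam x| * |F1 x| := abs_mul _ _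
        _ ≤ 1 * |F1 x| := by
            apply mul_le_mul_of_nonneg_right _ (abs_nonneg _)
            rw [abs_le]; constructor <;> linarith [hl.1, hl.2]
        _ < 1 := by rw [one_mul]; exact habs1
  -- pull back to ℝ
  refine ⟨fun x => F x / (1 - |F x|), ?_, ?_⟩
  · apply hFc.div (continuous_const.sub (continuous_abs.comp hFc))
    intro x
    have := hFabs x
    intro h
    simp only [Pi.sub_apply, Function.comp_apply, sub_eq_zero] at h
    exact absurd h.symm (ne_of_lt this)
  · intro x
    by_cases hx : φ x = univ
    · rw [hx]; trivial
    · obtain ⟨hne, hcpt, hcvx⟩ := hcomp x hx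
      have hr : rr (F x / (1 - |F x|)) = F x := rr_inv (hFabs x)
      have h1 : sInf (φ x) ≤ F x / (1 - |F x|) := by
        have : rr (sInf (φ x)) ≤ rr (F x / (1 - |F x|)) := by
          rw [hr, ← hGeq x hx]; exact hGF x
        exact rr_mono.le_iff_le.1 this
      have h2 : F x / (1 - |F x|) ≤ sSup (φ x) := by
        have : rr (F x / (1 - |F x|)) ≤ rr (sSup (φ x)) := by
          rw [hr, ← hHeq x hx]; exact hFH x
        exact rr_mono.le_iff_le.1 this
      have hsub : Icc (sInf (φ x)) (sSup (φ x)) ⊆ φ x :=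
        hcvx.ordConnected.out (hcpt.sInf_mem hne) (hcpt.sSup_mem hne)
      exact hsub ⟨h1, h2⟩
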